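/- For 0 < β < 1/2, the j-th sine Fourier coefficient of the function h_β (defined below, extended oddly and 2-periodically) is 0 for even j and equals (12/(j³π³β²))·[sin(jπβ)/(jπβ) − cos(jπβ)] for odd j. -/

import Mathlib

open Real MeasureTheory intervalIntegral

noncomputable def hcore (β x : ℝ) : ℝ :=
  if x < β then (x / β + 1)^2 * (1 - x / (2 * β)) - 1 else 1

noncomputable def hprofile (β x : ℝ) : ℝ :=
  if x ≤ 1/2 then hcore β x else hcore β (1 - x)

noncomputable def Gaux (a β x : ℝ) : ℝ :=
  (3/(2*β*a^2) + 3/(β^3*a^4)) * Real.sin (a*x)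
    + (-3/(2*β*a) - 3/(β^3*a^3)) * (x * Real.cos (a*x))
    + (1/(2*β^3*a)) * (x^3 * Real.cos (a*x))
    + (-3/(2*β^3*a^2)) * (x^2 * Real.sin (a*x))

lemma hasDerivAt_Gaux (a β : ℝ) (ha : a ≠ 0) (hβ : β ≠ 0) (x : ℝ) :
    HasDerivAt (Gaux a β) (((x/β + 1)^2 * (1 - x/(2*β)) - 1) * Real.sin (a*x)) x := by
  have hax : HasDerivAt (fun x : ℝ => a * x) a x := by
    simpa using (hasDerivAt_id x).const_mul a
  have hsin : HasDerivAt (fun x : ℝ => Real.sin (a*x)) (Real.cos (a*x) * a) x :=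
    (Real.hasDerivAt_sin (a*x)).comp x hax
  have hcos : HasDerivAt (fun x : ℝ => Real.cos (a*x)) (-Real.sin (a*x) * a) x :=
    (Real.hasDerivAt_cos (a*x)).comp x hax
  have h1 := hsin.const_mul (3/(2*β*a^2) + 3/(β^3*a^4))
  have h2 := ((hasDerivAt_id x).mul hcos).const_mul (-3/(2*β*a) - 3/(β^3*a^3))
  have h3 := ((hasDerivAt_pow 3 x).mul hcos).const_mul (1/(2*β^3*a))
  have h4 := ((hasDerivAt_pow 2 x).mul hsin).const_mul (-3/(2*β^3*a^2))
  have H := ((h1.add h2).add h3).add h4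
  refine (H.congr_deriv ?_).congr_of_eventuallyEq (Filter.Eventually.of_forall fun y => ?_)
  · simp only [id]
    field_simp
    ring
  · simp only [Gaux, Pi.add_apply, Pi.mul_apply, id]

lemma ae_of_eqOn {F G : ℝ → ℝ} {u v : ℝ} (h : Set.EqOn F G (Set.uIcc u v)) :
    F =ᵐ[volume.restrict (Set.uIoc u v)] G :=
  ae_restrict_of_forall_mem measurableSet_uIoc fun _ hx => h (Set.uIoc_subset_uIcc hx)

theorem stmt_7 (β : ℝ) (hβ0 : 0 < β) (hβ : β < 1/2) (j : ℕ) :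
    (2 * ∫ x in (0:ℝ)..1, hprofile β x * Real.sin (j * π * x)) =
      if Even j then 0
      else 12 / (j^3 * π^3 * β^2) *
        (Real.sin (j * π * β) / (j * π * β) - Real.cos (j * π * β)) := by
  rcases Nat.eq_zero_or_pos j with hj0 | hjpos
  · subst hj0; simp
  have hπ := Real.pi_pos
  have hj : (0:ℝ) < j := by exact_mod_cast hjpos
  set a : ℝ := (j:ℝ) * π with ha_def
  have ha : 0 < a := mul_pos hj hπ
  have ha' : a ≠ 0 := ne_of_gt ha
  have hβ' : β ≠ 0 := ne_of_gt hβ0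
  have hsa : Real.sin a = 0 := Real.sin_nat_mul_pi j
  have hca : Real.cos a = (-1)^j := by
    have := Real.cos_nat_mul_pi_sub 0 j
    simpa using this
  have hcos2 : Real.cos a * Real.cos a = 1 := by
    rw [hca, ← pow_add]
    exact Even.neg_one_pow ⟨j, rfl⟩
  -- piecewise descriptions
  have e1 : Set.EqOn (fun x => hprofile β x * Real.sin (a*x))
      (fun x => ((x/β + 1)^2 * (1 - x/(2*β)) - 1) * Real.sin (a*x)) (Set.uIcc 0 β) := by
    intro x hx
    rw [Set.uIcc_of_le (le_of_lt hβ0)] at hx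
    obtain ⟨hx0, hxβ⟩ := hx
    have hval : hprofile β x = (x/β + 1)^2 * (1 - x/(2*β)) - 1 := by
      unfold hprofile hcore
      rw [if_pos (by linarith : x ≤ 1/2)]
      by_cases h : x < β
      · rw [if_pos h]
      · rw [if_neg h]
        have hxb : x = β := le_antisymm hxβ (not_lt.1 h)
        rw [hxb]
        field_simp
        ring
    show hprofile β x * Real.sin (a*x)
      = ((x/β + 1)^2 * (1 - x/(2*β)) - 1) * Real.sin (a*x)
    rw [hval]
  have e2 : Set.EqOn (fun x => hprofile β x * Real.sin (a*x))
      (fun x => Real.sin (a*x)) (Set.uIcc β (1-β)) := by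
    intro x hx
    rw [Set.uIcc_of_le (by linarith)] at hx
    obtain ⟨hx1, hx2⟩ := hx
    have hpr : hprofile β x = 1 := by
      unfold hprofile hcore
      by_cases h : x ≤ 1/2
      · rw [if_pos h, if_neg (not_lt.2 hx1)]
      · rw [if_neg h, if_neg (not_lt.2 (by linarith : β ≤ 1 - x))]
    show hprofile β x * Real.sin (a*x) = _
    rw [hpr, one_mul]
  have e3 : Set.EqOn (fun x => hprofile β x * Real.sin (a*x))
      (fun x => (-Real.cos a) * ((((1-x)/β + 1)^2 * (1 - (1-x)/(2*β)) - 1) * Real.sin (a*(1-x))))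
      (Set.uIcc (1-β) 1) := by
    intro x hx
    rw [Set.uIcc_of_le (by linarith)] at hx
    obtain ⟨hx1, hx2⟩ := hx
    have hx' : ¬ (x ≤ 1/2) := by push_neg; linarith
    have hsin1 : Real.sin (a*(1-x)) = -Real.cos a * Real.sin (a*x) := by
      rw [mul_sub, mul_one, Real.sin_sub, hsa]
      ring
    have hval : hprofile β x = ((1-x)/β + 1)^2 * (1 - (1-x)/(2*β)) - 1 := by
      unfold hprofile hcore
      rw [if_neg hx']
      by_cases h : 1 - x < β
      · rw [if_pos h]
      · rw [if_neg h]
        have hxb : 1 - x = β := le_antisymm (by linarith) (not_lt.1 h)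
        rw [hxb]
        field_simp
        ring
    show hprofile β x * Real.sin (a*x)
      = (-Real.cos a) * ((((1-x)/β + 1)^2 * (1 - (1-x)/(2*β)) - 1) * Real.sin (a*(1-x)))
    rw [hval, hsin1]
    linear_combination (-(((1-x)/β + 1)^2 * (1 - (1-x)/(2*β)) - 1) * Real.sin (a*x)) * hcos2
  -- integrability
  have cont1 : Continuous (fun x : ℝ => ((x/β + 1)^2 * (1 - x/(2*β)) - 1) * Real.sin (a*x)) := by
    fun_prop
  have cont2 : Continuous (fun x : ℝ => Real.sin (a*x)) := by fun_prop
  have cont3 : Continuous (fun x : ℝ =>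
      (-Real.cos a) * ((((1-x)/β + 1)^2 * (1 - (1-x)/(2*β)) - 1) * Real.sin (a*(1-x)))) := by
    fun_prop
  have i1 : IntervalIntegrable (fun x => hprofile β x * Real.sin (a*x)) volume 0 β :=
    (cont1.intervalIntegrable 0 β).congr_ae (ae_of_eqOn e1).symm
  have i2 : IntervalIntegrable (fun x => hprofile β x * Real.sin (a*x)) volume β (1-β) :=
    (cont2.intervalIntegrable β (1-β)).congr_ae (ae_of_eqOn e2).symm
  have i3 : IntervalIntegrable (fun x => hprofile β x * Real.sin (a*x)) volume (1-β) 1 :=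
    (cont3.intervalIntegrable (1-β) 1).congr_ae (ae_of_eqOn e3).symm
  have hsplit : (∫ x in (0:ℝ)..1, hprofile β x * Real.sin (a*x))
      = (∫ x in (0:ℝ)..β, hprofile β x * Real.sin (a*x))
      + (∫ x in β..(1-β), hprofile β x * Real.sin (a*x))
      + (∫ x in (1-β)..(1:ℝ), hprofile β x * Real.sin (a*x)) := by
    rw [integral_add_adjacent_intervals i1 i2, integral_add_adjacent_intervals (i1.trans i2) i3]
  have hP1 : (∫ x in (0:ℝ)..β, hprofile β x * Real.sin (a*x)) = Gaux a β β - Gaux a β 0 := by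
    rw [intervalIntegral.integral_congr e1]
    exact integral_eq_sub_of_hasDerivAt (fun x _ => hasDerivAt_Gaux a β ha' hβ' x)
      (cont1.intervalIntegrable _ _)
  have hanti : ∀ x : ℝ, HasDerivAt (fun x => -Real.cos (a*x)/a) (Real.sin (a*x)) x := by
    intro x
    have hax : HasDerivAt (fun x : ℝ => a * x) a x := by
      simpa using (hasDerivAt_id x).const_mul a
    have hcos : HasDerivAt (fun x : ℝ => Real.cos (a*x)) (-Real.sin (a*x) * a) x :=
      (Real.hasDerivAt_cos (a*x)).comp x hax
    have H := hcos.neg.div_const a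
    exact H.congr_deriv (by rw [neg_mul, neg_neg, mul_div_assoc, div_self ha', mul_one])
  have hP2 : (∫ x in β..(1-β), hprofile β x * Real.sin (a*x))
      = (Real.cos (a*β) - Real.cos (a*(1-β)))/a := by
    rw [intervalIntegral.integral_congr e2,
      integral_eq_sub_of_hasDerivAt (fun x _ => hanti x) (cont2.intervalIntegrable _ _)]
    ring
  have hP3 : (∫ x in (1-β)..(1:ℝ), hprofile β x * Real.sin (a*x))
      = (-Real.cos a) * (Gaux a β β - Gaux a β 0) := by
    rw [intervalIntegral.integral_congr e3]
    have hb1 : (1:ℝ) - 1 = 0 := by norm_num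
    have hb2 : (1:ℝ) - (1-β) = β := by ring
    rw [intervalIntegral.integral_comp_sub_left
      (fun u => (-Real.cos a) * (((u/β + 1)^2 * (1 - u/(2*β)) - 1) * Real.sin (a*u))) 1,
      hb1, hb2, intervalIntegral.integral_const_mul,
      integral_eq_sub_of_hasDerivAt (fun x _ => hasDerivAt_Gaux a β ha' hβ' x)
        (cont1.intervalIntegrable _ _)]
  have hG0 : Gaux a β 0 = 0 := by simp [Gaux]
  have hcos1β : Real.cos (a*(1-β)) = Real.cos a * Real.cos (a*β) := by
    rw [mul_sub, mul_one, Real.cos_sub, hsa]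
    ring
  rw [hsplit, hP1, hP2, hP3, hG0, hcos1β]
  rcases Nat.even_or_odd j with he | ho
  · rw [if_pos he, hca, he.neg_one_pow]
    ring
  · rw [if_neg (Nat.not_even_iff_odd.mpr ho), hca, ho.neg_one_pow]
    simp only [Gaux]
    rw [ha_def]
    have hj' : (j:ℝ) ≠ 0 := ne_of_gt hj
    have hπ' : π ≠ 0 := ne_of_gt hπ
    field_simp
    ring
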